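/- Let f : ℝⁿ → ℝ^J with components f_j, and suppose λ* ∈ ℝ^J with λ* ≥ 0, x* ∈ X satisfies ⟨F(x*), x - x*⟩ + J⁻¹ f(x)ᵀλ* ≥ 0 for all x ∈ X. Suppose further that x̂ ∈ X and the vector λ̃ ∈ ℝ^J defined by λ̃ⱼ = 1 + λ*ⱼ if f_j(x̂) > 0 and λ̃ⱼ = 0 otherwise, satisfies ⟨F(x*), x̂ - x*⟩ + J⁻¹ f(x̂)ᵀ λ̃ ≤ C for a constant C. Then J⁻¹ ∑_{j=1}^J max(f_j(x̂), 0) ≤ C. -/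
import Mathlib

open RealInnerProductSpace

theorem infeasibility_bound {n J : ℕ} (hJ : 0 < J)
    (F : EuclideanSpace ℝ (Fin n) → EuclideanSpace ℝ (Fin n))
    (f : Fin J → EuclideanSpace ℝ (Fin n) → ℝ)
    (X : Set (EuclideanSpace ℝ (Fin n)))
    (xstar : EuclideanSpace ℝ (Fin n)) (hxstar : xstar ∈ X)
    (lamstar : Fin J → ℝ) (hlam : ∀ j, 0 ≤ lamstar j)
    (hopt : ∀ x ∈ X, 0 ≤ ⟪F xstar, x - xstar⟫ + (J : ℝ)⁻¹ * ∑ j, lamstar j * f j x)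
    (xhat : EuclideanSpace ℝ (Fin n)) (hxhat : xhat ∈ X) (C : ℝ)
    (hC : ⟪F xstar, xhat - xstar⟫
        + (J : ℝ)⁻¹ * ∑ j, (if f j xhat > 0 then 1 + lamstar j else 0) * f j xhat ≤ C) :
    (J : ℝ)⁻¹ * ∑ j, max (f j xhat) 0 ≤ C := by
  have h1 := hopt xhat hxhat
  have h2 : ∑ j, (if f j xhat > 0 then 1 + lamstar j else 0) * f j xhat
      = ∑ j, max (f j xhat) 0 + ∑ j, lamstar j * max (f j xhat) 0 := by
    rw [← Finset.sum_add_distrib]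
    apply Finset.sum_congr rfl
    intro j _
    by_cases h : f j xhat > 0
    · rw [if_pos h, max_eq_left h.le]; ring
    · rw [if_neg h, max_eq_right (le_of_not_gt h)]; ring
  have h3 : ∑ j, lamstar j * f j xhat ≤ ∑ j, lamstar j * max (f j xhat) 0 :=
    Finset.sum_le_sum fun j _ => mul_le_mul_of_nonneg_left (le_max_left _ _) (hlam j)
  have hJ' : (0:ℝ) ≤ (J : ℝ)⁻¹ := by positivity
  nlinarith [mul_nonneg hJ' (sub_nonneg.mpr h3)]
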